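/- arXiv:1910.05764 — 5 statements merged into one kernel-verified Lean document; each statement's English description precedes it below -/
import Mathlib

section
/- Let n, d ≥ 1 be integers and I a fixed sequence of length d in {1,...,n}. Then limsup_{N→∞} |S_{N,I}|^{1/N} ≤ (n^d - 1)^{1/d} < n. -/
private lemma flatten_ofFn_take {α : Type*} (d : ℕ) :
    ∀ (q : ℕ) (a : List α),
      (List.ofFn fun i : Fin q => (a.drop (d*i)).take d).flatten = a.take (d*q) := by
  intro q
  induction q with
  | zero => intro a; simp
  | succ q ih =>
    intro a
    rw [List.ofFn_succ]
    simp only [Fin.val_zero, Nat.mul_zero, List.drop_zero, List.flatten_cons]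
    have h1 : ∀ i : Fin q, (a.drop (d * (i.succ : Fin (q+1)))).take d
        = ((a.drop d).drop (d*i)).take d := by
      intro i
      rw [List.drop_drop]
      congr 2
      simp [Fin.val_succ]
      ring
    have h2 : (List.ofFn fun i : Fin q => (a.drop (d * (i.succ : Fin (q+1)))).take d)
        = List.ofFn fun i : Fin q => ((a.drop d).drop (d*i)).take d := by
      congr 1
      funext i
      exact h1 i
    rw [h2, ih (a.drop d), ← List.take_add]
    congr 1
    ring

private lemma card_avoid_le (n d N : ℕ) (hd : 1 ≤ d) (I : List (Fin n)) (hI : I.length = d) :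
    Nat.card {a : List (Fin n) // a.length = N ∧ ¬ I <:+: a}
      ≤ (n ^ d - 1) ^ (N / d) * n ^ (N % d) := by
  set q := N / d with hq
  set r := N % d with hr
  have hdm : d * q + r = N := Nat.div_add_mod N d
  have hdqN : d * q ≤ N := by omega
  haveI hfinv : ∀ m : ℕ, Finite {l : List (Fin n) // l.length = m} :=
    fun m => inferInstanceAs (Finite (List.Vector (Fin n) m))
  haveI : Finite {l : List (Fin n) // l.length = d ∧ l ≠ I} :=
    Finite.of_injective
      (fun x => (⟨x.1, x.2.1⟩ : {l : List (Fin n) // l.length = d}))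
      (by intro x y h; simp only [Subtype.mk.injEq] at h; exact Subtype.ext h)
  have hcard1 : Nat.card {l : List (Fin n) // l.length = d ∧ l ≠ I} = n ^ d - 1 := by
    have e : {l : List (Fin n) // l.length = d ∧ l ≠ I}
        ≃ {v : List.Vector (Fin n) d // ¬ v = (show List.Vector (Fin n) d from ⟨I, hI⟩)} :=
      { toFun := fun x => ⟨⟨x.1, x.2.1⟩, fun h => x.2.2 (congrArg Subtype.val h)⟩
        invFun := fun v => ⟨v.1.1, v.1.2, fun h => v.2 (Subtype.ext h)⟩
        left_inv := fun x => rfl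
        right_inv := fun v => rfl }
    rw [Nat.card_congr e, Nat.card_eq_fintype_card, Fintype.card_subtype_compl,
      Fintype.card_subtype_eq, card_vector, Fintype.card_fin]
  have hcard2 : Nat.card {l : List (Fin n) // l.length = r} = n ^ r := by
    have : Nat.card (List.Vector (Fin n) r) = n ^ r := by
      rw [Nat.card_eq_fintype_card, card_vector, Fintype.card_fin]
    exact this
  -- the injection
  set f : {a : List (Fin n) // a.length = N ∧ ¬ I <:+: a} →
      (Fin q → {l : List (Fin n) // l.length = d ∧ l ≠ I})
        × {l : List (Fin n) // l.length = r} :=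
    fun a =>
      ⟨fun i => ⟨(a.1.drop (d*i)).take d, by
          constructor
          · have hlen : (a.1.drop (d*i)).length = N - d*i := by
              rw [List.length_drop, a.2.1]
            rw [List.length_take, hlen]
            have h3 : d * (i + 1) ≤ d * q := Nat.mul_le_mul_left d i.2
            rw [Nat.mul_succ] at h3
            omega
          · intro hEq
            apply a.2.2
            have hpre : I <+: a.1.drop (d*i) := by
              have := List.take_prefix d (a.1.drop (d*i))
              rwa [hEq] at this
            exact hpre.isInfix.trans (List.drop_suffix (d*i) a.1).isInfix⟩,
       ⟨a.1.drop (d*q), by rw [List.length_drop, a.2.1]; omega⟩⟩ with hf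
  have hinj : Function.Injective f := by
    intro a b hab
    have h1 : ∀ i : Fin q, (a.1.drop (d*i)).take d = (b.1.drop (d*i)).take d := by
      intro i
      have := congrArg (fun p => (p.1 i).1) hab
      simpa [hf] using this
    have h2 : a.1.drop (d*q) = b.1.drop (d*q) := by
      have := congrArg (fun p => p.2.1) hab
      simpa [hf] using this
    have hflat : (List.ofFn fun i : Fin q => (a.1.drop (d*i)).take d)
        = List.ofFn fun i : Fin q => (b.1.drop (d*i)).take d := by
      congr 1; funext i; exact h1 i
    have ha := flatten_ofFn_take d q a.1
    have hb := flatten_ofFn_take d q b.1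
    have htake : a.1.take (d*q) = b.1.take (d*q) := by
      rw [← ha, ← hb, hflat]
    have : a.1 = b.1 := by
      rw [← List.take_append_drop (d*q) a.1, ← List.take_append_drop (d*q) b.1, htake, h2]
    exact Subtype.ext this
  calc Nat.card {a : List (Fin n) // a.length = N ∧ ¬ I <:+: a}
      ≤ Nat.card ((Fin q → {l : List (Fin n) // l.length = d ∧ l ≠ I})
          × {l : List (Fin n) // l.length = r}) := Nat.card_le_card_of_injective f hinj
    _ = (n ^ d - 1) ^ q * n ^ r := by
        rw [Nat.card_prod, Nat.card_fun, hcard1, hcard2, Nat.card_eq_fintype_card,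
          Fintype.card_fin]


open Filter

/-- For `n, d ≥ 1` and a fixed word `I` of length `d` over `{1,…,n}`,
`limsup_N |S_{N,I}|^{1/N} ≤ (n^d - 1)^{1/d} < n`, where `S_{N,I}` is the set of
length-`N` words avoiding `I` as a contiguous subword. -/
theorem stmt1 (n d : ℕ) (hn : 1 ≤ n) (hd : 1 ≤ d) (I : List (Fin n)) (hI : I.length = d) :
    Filter.limsup
      (fun N : ℕ =>
        (Nat.card {a : List (Fin n) // a.length = N ∧ ¬ I <:+: a} : ℝ) ^ (1 / (N : ℝ)))
      Filter.atTop ≤ ((n : ℝ) ^ d - 1) ^ (1 / (d : ℝ)) ∧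
    ((n : ℝ) ^ d - 1) ^ (1 / (d : ℝ)) < n := by
  have hd0 : (d : ℝ) ≠ 0 := Nat.cast_ne_zero.mpr (by omega)
  have hn1R : (1:ℝ) ≤ (n:ℝ) := by exact_mod_cast hn
  have hxd : (1:ℝ) ≤ (n:ℝ) ^ d := one_le_pow₀ hn1R
  have hx0 : (0:ℝ) ≤ (n:ℝ) ^ d - 1 := by linarith
  set u : ℕ → ℝ := fun N : ℕ =>
      (Nat.card {a : List (Fin n) // a.length = N ∧ ¬ I <:+: a} : ℝ) ^ (1 / (N : ℝ)) with hu
  set c : ℝ := ((n:ℝ) ^ d - 1) ^ (1 / (d : ℝ)) with hc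
  have hnd : ((n:ℝ) ^ d) ^ (1 / (d:ℝ)) = n := by
    rw [← Real.rpow_natCast (n:ℝ) d, ← Real.rpow_mul (Nat.cast_nonneg n), mul_one_div,
      div_self hd0, Real.rpow_one]
  have h2 : c < n := by
    calc c < ((n:ℝ) ^ d) ^ (1 / (d:ℝ)) :=
          Real.rpow_lt_rpow hx0 (by linarith) (by positivity)
      _ = n := hnd
  refine ⟨?_, h2⟩
  have hunn : ∀ N : ℕ, 0 ≤ u N := fun N => Real.rpow_nonneg (Nat.cast_nonneg _) _
  have hcob : Filter.IsCoboundedUnder (· ≤ ·) Filter.atTop u :=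
    Filter.isCoboundedUnder_le_of_eventually_le Filter.atTop
      (x := 0) (Filter.Eventually.of_forall hunn)
  have hm1 : 1 ≤ n ^ d := Nat.one_le_pow d n (by omega)
  have hcastm : ((n ^ d - 1 : ℕ) : ℝ) = (n:ℝ) ^ d - 1 := by
    rw [Nat.cast_sub hm1]; push_cast; ring
  by_cases hn1 : n = 1
  · -- n = 1 : everything is eventually zero
    have hc0 : c = 0 := by
      rw [hc, hn1]
      norm_num
      exact Real.zero_rpow (inv_ne_zero hd0)
    rw [hc0]
    apply Filter.limsup_le_of_le hcob
    filter_upwards [eventually_ge_atTop (max d 1)] with N hN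
    have hNd : d ≤ N := le_trans (le_max_left _ _) hN
    have hN1 : 1 ≤ N := le_trans (le_max_right _ _) hN
    have hcard : Nat.card {a : List (Fin n) // a.length = N ∧ ¬ I <:+: a} = 0 := by
      have h := card_avoid_le n d N hd I hI
      have hq1 : N / d ≠ 0 := by
        have := (Nat.one_le_div_iff (show 0 < d by omega)).mpr hNd
        omega
      have h0 : (n ^ d - 1) ^ (N / d) * n ^ (N % d) = 0 := by
        rw [hn1]; simp [Nat.zero_pow (Nat.pos_of_ne_zero hq1)]
      omega
    have hNr : (1 / (N:ℝ)) ≠ 0 := one_div_ne_zero (Nat.cast_ne_zero.mpr (by omega))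
    simp only [hu, hcard, Nat.cast_zero]
    rw [Real.zero_rpow hNr]
  · -- n ≥ 2
    have hn2 : 2 ≤ n := by omega
    have hx1 : (1:ℝ) ≤ (n:ℝ) ^ d - 1 := by
      have h2n : (2:ℝ) ≤ (n:ℝ) := by exact_mod_cast hn2
      have h2d : (2:ℝ) ≤ (2:ℝ) ^ d := by
        calc (2:ℝ) = 2 ^ 1 := (pow_one 2).symm
          _ ≤ 2 ^ d := pow_le_pow_right₀ one_le_two hd
      have : (2:ℝ) ^ d ≤ (n:ℝ) ^ d := pow_le_pow_left₀ (by norm_num) h2n d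
      linarith
    have hc1 : (1:ℝ) ≤ c := by
      calc (1:ℝ) = 1 ^ (1 / (d:ℝ)) := (Real.one_rpow _).symm
        _ ≤ c := Real.rpow_le_rpow (by norm_num) hx1 (by positivity)
    have hc0 : (0:ℝ) ≤ c := by linarith
    have hcd : c ^ d = (n:ℝ) ^ d - 1 := by
      rw [hc, ← Real.rpow_natCast (((n:ℝ) ^ d - 1) ^ (1 / (d:ℝ))) d,
        ← Real.rpow_mul hx0, one_div_mul_cancel hd0, Real.rpow_one]
    set K : ℝ := (n:ℝ) ^ d with hK
    have hK1 : (1:ℝ) ≤ K := hxd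
    have hK0 : (0:ℝ) < K := by linarith
    have hgt : Filter.Tendsto (fun N : ℕ => c * K ^ (1 / (N:ℝ))) Filter.atTop (nhds c) := by
      have h1 : Filter.Tendsto (fun N : ℕ => 1 / (N:ℝ)) Filter.atTop (nhds 0) :=
        tendsto_one_div_atTop_nhds_zero_nat
      have h2 : ContinuousAt (fun t : ℝ => K ^ t) 0 :=
        Real.continuousAt_const_rpow (ne_of_gt hK0)
      have h3 : Filter.Tendsto (fun N : ℕ => K ^ (1 / (N:ℝ))) Filter.atTop
          (nhds (K ^ (0:ℝ))) := h2.tendsto.comp h1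
      rw [Real.rpow_zero] at h3
      have h4 := h3.const_mul c
      simpa using h4
    have hfg : ∀ᶠ N in Filter.atTop, u N ≤ c * K ^ (1 / (N:ℝ)) := by
      filter_upwards [eventually_ge_atTop 1] with N hN1
      have hNr : (N:ℝ) ≠ 0 := Nat.cast_ne_zero.mpr (by omega)
      have hcardR : (Nat.card {a : List (Fin n) // a.length = N ∧ ¬ I <:+: a} : ℝ)
          ≤ c ^ N * K := by
        have h := card_avoid_le n d N hd I hI
        have hdq : d * (N / d) ≤ N := Nat.mul_div_le N d
        have hrd : N % d ≤ d := le_of_lt (Nat.mod_lt N (by omega))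
        calc (Nat.card {a : List (Fin n) // a.length = N ∧ ¬ I <:+: a} : ℝ)
            ≤ (((n ^ d - 1) ^ (N / d) * n ^ (N % d) : ℕ) : ℝ) := by exact_mod_cast h
          _ = ((n:ℝ) ^ d - 1) ^ (N / d) * (n:ℝ) ^ (N % d) := by
              push_cast [hcastm]; ring
          _ = (c ^ d) ^ (N / d) * (n:ℝ) ^ (N % d) := by rw [hcd]
          _ = c ^ (d * (N / d)) * (n:ℝ) ^ (N % d) := by rw [← pow_mul]
          _ ≤ c ^ N * K := by
              apply mul_le_mul (pow_le_pow_right₀ hc1 hdq) (pow_le_pow_right₀ hn1R hrd)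
                (by positivity) (by positivity)
      calc u N ≤ (c ^ N * K) ^ (1 / (N:ℝ)) :=
            Real.rpow_le_rpow (Nat.cast_nonneg _) hcardR (by positivity)
        _ = (c ^ N) ^ (1 / (N:ℝ)) * K ^ (1 / (N:ℝ)) :=
            Real.mul_rpow (by positivity) (by positivity)
        _ = c * K ^ (1 / (N:ℝ)) := by
            rw [← Real.rpow_natCast c N, ← Real.rpow_mul hc0, mul_one_div,
              div_self hNr, Real.rpow_one]
    calc Filter.limsup u Filter.atTop
        ≤ Filter.limsup (fun N : ℕ => c * K ^ (1 / (N:ℝ))) Filter.atTop :=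
          Filter.limsup_le_limsup hfg hcob hgt.isBoundedUnder_le
      _ = c := hgt.limsup_eq
end

section
/- Fix integers n, d ≥ 1, a prime p > 2^{dn}, and the score function σ defined via F_i(j) as above. Let 1 ≤ t ≤ N - d + 1 and let a, b be distinct sequences of length N in {1,...,n} with a_j = b_j for all j outside the range t ≤ j < t + d. Then σ(a) ≠ σ(b). -/
lemma sum_range_two_pow (m : ℕ) : ∑ i ∈ Finset.range m, 2 ^ i = 2 ^ m - 1 := by
  induction m with
  | zero => simp
  | succ k ih =>
    rw [Finset.sum_range_succ, ih]
    have := Nat.one_le_two_pow (n := k)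
    have : 2 ^ (k + 1) = 2 ^ k + 2 ^ k := by ring
    omega

lemma key_lemma (n d t : ℕ) (hn : 1 ≤ n) {j j' i i' : ℕ}
    (hj1 : t ≤ j) (hj2 : j < t + d) (hj1' : t ≤ j') (hj2' : j' < t + d)
    (hi1 : 1 ≤ i) (hi2 : i ≤ n) (hi1' : 1 ≤ i') (hi2' : i' ≤ n)
    (h : (j * n + i) % (d * n) = (j' * n + i') % (d * n)) : j = j' ∧ i = i' := by
  have hmod : (j * n + i) ≡ (j' * n + i') [MOD d * n] := h
  have hb1 : j' * n + i' < j * n + i + d * n := by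
    have h1 : (j' + 1) * n ≤ (j + d) * n := Nat.mul_le_mul_right n (by omega)
    have h2 : (j + d) * n = j * n + d * n := by ring
    have h3 : (j' + 1) * n = j' * n + n := by ring
    linarith
  have hb2 : j * n + i < j' * n + i' + d * n := by
    have h1 : (j + 1) * n ≤ (j' + d) * n := Nat.mul_le_mul_right n (by omega)
    have h2 : (j' + d) * n = j' * n + d * n := by ring
    have h3 : (j + 1) * n = j * n + n := by ring
    linarith
  have heq : j * n + i = j' * n + i' := by
    apply hmod.eq_of_abs_lt
    rw [abs_sub_lt_iff]
    zify at hb1 hb2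
    constructor <;> push_cast <;> linarith
  have hj : j = j' := by
    rcases Nat.lt_trichotomy j j' with h' | h' | h'
    · have h4 : (j + 1) * n ≤ j' * n := Nat.mul_le_mul_right n (by omega)
      have h5 : (j + 1) * n = j * n + n := by ring
      linarith
    · exact h'
    · have h4 : (j' + 1) * n ≤ j * n := Nat.mul_le_mul_right n (by omega)
      have h5 : (j' + 1) * n = j' * n + n := by ring
      linarith
  subst hj
  exact ⟨rfl, Nat.add_left_cancel heq⟩




/-- Fix `n, d ≥ 1`, a prime `p > 2^{dn}`, and the score function `σ` built from `F` as in the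
paper.  If `1 ≤ t ≤ N - d + 1` and `a, b` are distinct sequences of length `N` in `{1,…,n}`
(modelled as `a b : Fin N → Fin n`, position `j+1` carrying value `a j + 1`) which agree at
every (1-indexed) position `j` outside the range `t ≤ j < t + d`, then `σ(a) ≠ σ(b)`. -/
theorem stmt3 (n d p : ℕ) (hn : 1 ≤ n) (hd : 1 ≤ d) (hp : p.Prime) (hp2 : 2 ^ (d * n) < p)
    (F : ℕ → ℕ → ℕ)
    (hF : ∀ i j : ℕ, 1 ≤ i → i ≤ n → 1 ≤ j →
      F i j % p = 2 ^ ((j * n + i) % (d * n)) % p ∧ j * p ≤ F i j ∧ F i j < (j + 1) * p)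
    (N t : ℕ) (ht1 : 1 ≤ t) (ht2 : t + d ≤ N + 1)
    (a b : Fin N → Fin n) (hab : a ≠ b)
    (hagree : ∀ j : Fin N, ¬ (t ≤ (j : ℕ) + 1 ∧ (j : ℕ) + 1 < t + d) → a j = b j) :
    ∑ j : Fin N, F ((a j : ℕ) + 1) ((j : ℕ) + 1) ≠
      ∑ j : Fin N, F ((b j : ℕ) + 1) ((j : ℕ) + 1) := by
  intro hsum
  have hdn : 0 < d * n := Nat.mul_pos hd hn
  set e : ℕ → ℕ → ℕ := fun i j => (j * n + i) % (d * n) with he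
  have hpow : ∀ i j, 2 ^ e i j < p := fun i j =>
    lt_trans (Nat.pow_lt_pow_right one_lt_two (Nat.mod_lt _ hdn)) hp2
  have hmodF : ∀ (c : Fin N → Fin n) (j : Fin N),
      F ((c j : ℕ) + 1) ((j : ℕ) + 1) % p = 2 ^ e ((c j : ℕ) + 1) ((j : ℕ) + 1) := by
    intro c j
    have h1 := (hF ((c j : ℕ) + 1) ((j : ℕ) + 1) (by omega)
      (by have := (c j).isLt; omega) (by omega)).1
    rw [h1, Nat.mod_eq_of_lt (hpow _ _)]
  -- sums mod p
  have hsummod : ∀ (c : Fin N → Fin n),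
      (∑ j : Fin N, F ((c j : ℕ) + 1) ((j : ℕ) + 1)) % p
        = (∑ j : Fin N, 2 ^ e ((c j : ℕ) + 1) ((j : ℕ) + 1)) % p := by
    intro c
    rw [Finset.sum_nat_mod]
    congr 1
    exact Finset.sum_congr rfl fun j _ => hmodF c j
  have hmeq : (∑ j : Fin N, 2 ^ e ((a j : ℕ) + 1) ((j : ℕ) + 1)) % p
      = (∑ j : Fin N, 2 ^ e ((b j : ℕ) + 1) ((j : ℕ) + 1)) % p := by
    rw [← hsummod a, ← hsummod b, hsum]
  -- window
  set W : Finset (Fin N) :=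
    Finset.univ.filter (fun j : Fin N => t ≤ (j : ℕ) + 1 ∧ (j : ℕ) + 1 < t + d) with hW
  have hWmem : ∀ j : Fin N, j ∈ W ↔ (t ≤ (j : ℕ) + 1 ∧ (j : ℕ) + 1 < t + d) := by
    intro j; simp [hW]
  have hsplit : ∀ (c : Fin N → Fin n),
      ∑ j : Fin N, 2 ^ e ((c j : ℕ) + 1) ((j : ℕ) + 1)
        = (∑ j ∈ W, 2 ^ e ((c j : ℕ) + 1) ((j : ℕ) + 1))
          + ∑ j ∈ Wᶜ, 2 ^ e ((c j : ℕ) + 1) ((j : ℕ) + 1) := by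
    intro c
    exact (Finset.sum_add_sum_compl W _).symm
  have hcompl : ∑ j ∈ Wᶜ, 2 ^ e ((a j : ℕ) + 1) ((j : ℕ) + 1)
      = ∑ j ∈ Wᶜ, 2 ^ e ((b j : ℕ) + 1) ((j : ℕ) + 1) := by
    refine Finset.sum_congr rfl fun j hj => ?_
    rw [hagree j (by simpa [hWmem] using (Finset.mem_compl.1 hj))]
  -- window sums congruent mod p
  have hwin : (∑ j ∈ W, 2 ^ e ((a j : ℕ) + 1) ((j : ℕ) + 1))
      ≡ (∑ j ∈ W, 2 ^ e ((b j : ℕ) + 1) ((j : ℕ) + 1)) [MOD p] := by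
    have h : (∑ j ∈ W, 2 ^ e ((a j : ℕ) + 1) ((j : ℕ) + 1))
        + (∑ j ∈ Wᶜ, 2 ^ e ((b j : ℕ) + 1) ((j : ℕ) + 1))
        ≡ (∑ j ∈ W, 2 ^ e ((b j : ℕ) + 1) ((j : ℕ) + 1))
        + (∑ j ∈ Wᶜ, 2 ^ e ((b j : ℕ) + 1) ((j : ℕ) + 1)) [MOD p] := by
      have := hmeq
      rw [hsplit a, hsplit b, hcompl] at this
      exact this
    exact h.add_right_cancel' _
  -- injectivity of exponents on W
  have hinj : ∀ (c : Fin N → Fin n), Set.InjOn (fun j : Fin N => e ((c j : ℕ) + 1) ((j : ℕ) + 1)) W := by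
    intro c j1 hj1 j2 hj2 hje
    have h1 := (hWmem j1).1 hj1
    have h2 := (hWmem j2).1 hj2
    have := (key_lemma n d t hn h1.1 h1.2 h2.1 h2.2 (by omega)
      (by have := (c j1).isLt; omega) (by omega) (by have := (c j2).isLt; omega) hje).1
    exact Fin.ext (by omega)
  have himg : ∀ (c : Fin N → Fin n),
      ∑ j ∈ W, 2 ^ e ((c j : ℕ) + 1) ((j : ℕ) + 1)
        = ∑ k ∈ W.image (fun j : Fin N => e ((c j : ℕ) + 1) ((j : ℕ) + 1)), 2 ^ k :=
    fun c => (Finset.sum_image (fun x hx y hy h => hinj c hx hy h)).symm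
  have hsub : ∀ (c : Fin N → Fin n),
      W.image (fun j : Fin N => e ((c j : ℕ) + 1) ((j : ℕ) + 1)) ⊆ Finset.range (d * n) := by
    intro c k hk
    rw [Finset.mem_range]
    obtain ⟨j, _, rfl⟩ := Finset.mem_image.1 hk
    exact Nat.mod_lt _ hdn
  have hbound : ∀ (c : Fin N → Fin n),
      ∑ j ∈ W, 2 ^ e ((c j : ℕ) + 1) ((j : ℕ) + 1) < p := by
    intro c
    rw [himg c]
    calc _ ≤ ∑ k ∈ Finset.range (d * n), 2 ^ k :=
          Finset.sum_le_sum_of_subset (hsub c)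
      _ = 2 ^ (d * n) - 1 := sum_range_two_pow _
      _ < p := lt_of_le_of_lt (Nat.sub_le _ _) hp2
  have hWeq : ∑ j ∈ W, 2 ^ e ((a j : ℕ) + 1) ((j : ℕ) + 1)
      = ∑ j ∈ W, 2 ^ e ((b j : ℕ) + 1) ((j : ℕ) + 1) :=
    hwin.eq_of_lt_of_lt (hbound a) (hbound b)
  -- image sets equal
  have hsets : W.image (fun j : Fin N => e ((a j : ℕ) + 1) ((j : ℕ) + 1))
      = W.image (fun j : Fin N => e ((b j : ℕ) + 1) ((j : ℕ) + 1)) := by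
    apply Finset.geomSum_injective (le_refl 2)
    beta_reduce
    rw [← himg a, ← himg b]
    exact hWeq
  -- conclude a = b
  apply hab
  funext j
  by_cases hj : t ≤ (j : ℕ) + 1 ∧ (j : ℕ) + 1 < t + d
  · have hjW : j ∈ W := (hWmem j).2 hj
    have hmem : e ((a j : ℕ) + 1) ((j : ℕ) + 1)
        ∈ W.image (fun j : Fin N => e ((b j : ℕ) + 1) ((j : ℕ) + 1)) := by
      rw [← hsets]
      exact Finset.mem_image_of_mem _ hjW
    obtain ⟨j', hj'W, hj'e⟩ := Finset.mem_image.1 hmem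
    have h2 := (hWmem j').1 hj'W
    obtain ⟨hjj, hii⟩ := key_lemma n d t hn h2.1 h2.2 hj.1 hj.2 (by omega)
      (by have := (b j').isLt; omega) (by omega) (by have := (a j).isLt; omega) hj'e
    have : j' = j := Fin.ext (by omega)
    subst this
    exact Fin.ext (by omega)
  · exact hagree j hj
end

section
/- Let k be an algebraically closed field and let n < m be positive integers. The set N_{n,m} of n × m matrices over k of rank strictly less than n is a Zariski-closed subset of the affine space M_{n×m}(k) ≅ k^{nm} of dimension at most nm - (1 + m - n); that is, N_{n,m} has codimension at least 1 + m - n. -/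
open Finset in
lemma core_lemma {R : Type*} [CommRing R] :
    ∀ (N : ℕ) (P : ℕ → Ideal R) (x b : ℕ → R) (α : ℕ → ℕ),
      (∀ i, (P i).IsPrime) → (∀ i, P i ≤ P (i+1)) →
      (∀ i < N, x i ∈ P (i+1)) → (∀ i < N, x i ∉ P i) →
      ((∏ i ∈ range N, x i ^ α i) +
        ∑ j ∈ range N, b j * ((∏ l ∈ range j, x l ^ α l) * x j ^ (α j + 1)) ∈ P 0) →
      False := by
  intro N
  induction N with
  | zero =>
    intro P x b α hpr _ _ _ hmem
    simp only [range_zero, prod_empty, sum_empty, add_zero] at hmem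
    exact (hpr 0).ne_top ((Ideal.eq_top_iff_one _).2 hmem)
  | succ N ih =>
    intro P x b α hpr hle hx1 hx0 hmem
    have key : (∏ i ∈ range (N+1), x i ^ α i) +
        ∑ j ∈ range (N+1), b j * ((∏ l ∈ range j, x l ^ α l) * x j ^ (α j + 1))
        = x 0 ^ α 0 * (((∏ i ∈ range N, x (i+1) ^ α (i+1)) +
            ∑ j ∈ range N, b (j+1) * ((∏ l ∈ range j, x (l+1) ^ α (l+1)) * x (j+1) ^ (α (j+1) + 1)))
          + b 0 * x 0) := by
      rw [Finset.prod_range_succ', Finset.sum_range_succ',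
        Finset.sum_congr rfl (fun j _ => by rw [Finset.prod_range_succ'])]
      simp only [range_zero, prod_empty, one_mul]
      have hS : x 0 ^ α 0 * (∑ j ∈ range N, b (j+1) *
            ((∏ l ∈ range j, x (l+1) ^ α (l+1)) * x (j+1) ^ (α (j+1) + 1)))
          = ∑ j ∈ range N, b (j+1) *
            ((∏ l ∈ range j, x (l+1) ^ α (l+1)) * x 0 ^ α 0 * x (j+1) ^ (α (j+1) + 1)) := by
        rw [Finset.mul_sum]; exact Finset.sum_congr rfl fun j _ => by ring
      rw [mul_add, mul_add, hS]
      ring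
    rw [key] at hmem
    have h2 : ((∏ i ∈ range N, x (i+1) ^ α (i+1)) +
        ∑ j ∈ range N, b (j+1) * ((∏ l ∈ range j, x (l+1) ^ α (l+1)) * x (j+1) ^ (α (j+1) + 1)))
        + b 0 * x 0 ∈ P 0 := by
      rcases (hpr 0).mem_or_mem hmem with h | h
      · exact absurd ((hpr 0).mem_of_pow_mem _ h) (hx0 0 (Nat.succ_pos N))
      · exact h
    have h3 : (∏ i ∈ range N, x (i+1) ^ α (i+1)) +
        ∑ j ∈ range N, b (j+1) * ((∏ l ∈ range j, x (l+1) ^ α (l+1)) * x (j+1) ^ (α (j+1) + 1))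
        ∈ P 1 := by
      have := hle 0 h2
      have hb : b 0 * x 0 ∈ P 1 := Ideal.mul_mem_left _ _ (hx1 0 (Nat.succ_pos N))
      simpa using Ideal.sub_mem _ this hb
    exact ih (fun i => P (i+1)) (fun i => x (i+1)) (fun i => b (i+1)) (fun i => α (i+1))
      (fun i => hpr (i+1)) (fun i => hle (i+1))
      (fun i hi => hx1 (i+1) (Nat.succ_lt_succ hi))
      (fun i hi => hx0 (i+1) (Nat.succ_lt_succ hi)) h3

open MvPolynomial Finset in
lemma count_lemma {k : Type*} [Field k] {σ : Type*} [Fintype σ]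
    (N : ℕ) (hN : Fintype.card σ < N) (z : Fin N → MvPolynomial σ k) :
    ∃ Q : MvPolynomial (Fin N) k, Q ≠ 0 ∧ MvPolynomial.aeval z Q = 0 := by
  classical
  set D := Fintype.card σ with hD
  set r := (Finset.univ.sup fun i => (z i).totalDegree) + 1 with hr
  set t := (N * r + 1) ^ D with ht
  set e := N * t * r with he
  have ht1 : 1 ≤ t := Nat.one_le_pow _ _ (Nat.succ_pos _)
  -- the box family
  set G : (Fin N → Fin (t+1)) → MvPolynomial σ k := fun a => ∏ i, z i ^ (a i : ℕ) with hG
  -- coefficient-restriction linear map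
  set π : MvPolynomial σ k →ₗ[k] ((σ → Fin (e+1)) → k) :=
    { toFun := fun p f => coeff (Finsupp.equivFunOnFinite.symm fun s => (f s : ℕ)) p
      map_add' := fun p q => by funext f; simp [coeff_add]
      map_smul' := fun c p => by funext f; simp [coeff_smul] } with hπ
  -- cardinality comparison
  have hcard : Fintype.card (σ → Fin (e+1)) < Fintype.card (Fin N → Fin (t+1)) := by
    rw [Fintype.card_fun, Fintype.card_fun, Fintype.card_fin, Fintype.card_fin, Fintype.card_fin]
    have hstep : e + 1 ≤ (N * r + 1) * t := by
      have h2 : (N * r + 1) * t = N * t * r + t := by ring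
      rw [h2, he]
      exact Nat.add_le_add_left ht1 _
    calc (e+1) ^ D ≤ ((N * r + 1) * t) ^ D := Nat.pow_le_pow_left hstep _
      _ = t * t ^ D := by rw [mul_pow, ← ht]
      _ = t ^ (D + 1) := by ring
      _ < (t+1) ^ (D+1) := Nat.pow_lt_pow_left (Nat.lt_succ_self t) (Nat.succ_ne_zero D)
      _ ≤ (t+1) ^ N := Nat.pow_le_pow_right (by omega) (by omega)
  -- the composed family is linearly dependent
  have hdep : ¬ LinearIndependent k (fun a => π (G a)) := by
    intro h
    have := h.fintype_card_le_finrank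
    rw [Module.finrank_fintype_fun_eq_card] at this
    omega
  obtain ⟨c, hsum, a₀, hc⟩ := Fintype.not_linearIndependent_iff.mp hdep
  set p : MvPolynomial σ k := ∑ a, c a • G a with hp
  have hπp : π p = 0 := by
    rw [hp, map_sum]
    simpa only [map_smul] using hsum
  have hdegG : ∀ a, (G a).totalDegree ≤ e := by
    intro a
    refine le_trans (totalDegree_finset_prod _ _) ?_
    calc ∑ i, (z i ^ (a i : ℕ)).totalDegree
        ≤ ∑ _i : Fin N, t * r := by
          refine Finset.sum_le_sum fun i _ => le_trans (totalDegree_pow _ _) ?_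
          refine Nat.mul_le_mul (Nat.lt_succ_iff.mp (a i).isLt) ?_
          rw [hr]
          exact Nat.le_succ_of_le
            (Finset.le_sup (f := fun i => (z i).totalDegree) (Finset.mem_univ i))
      _ = N * t * r := by rw [Finset.sum_const, Finset.card_univ, Fintype.card_fin, smul_eq_mul]; ring
  have hdegp : p.totalDegree ≤ e := by
    refine le_trans (totalDegree_finset_sum _ _) ?_
    refine Finset.sup_le fun a _ => le_trans (totalDegree_smul_le _ _) (hdegG a)
  have hp0 : p = 0 := by
    apply MvPolynomial.ext
    intro β
    by_cases hb : ∀ s, β s ≤ e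
    · have := congrFun hπp (fun s => (⟨β s, Nat.lt_succ_of_le (hb s)⟩ : Fin (e+1)))
      simpa [hπ, Finsupp.equivFunOnFinite_symm_coe] using this
    · push_neg at hb
      obtain ⟨s, hs⟩ := hb
      rw [MvPolynomial.coeff_zero]
      by_contra hne
      have hmem : β ∈ p.support := MvPolynomial.mem_support_iff.mpr hne
      have h1 : (β.sum fun _ n => n) ≤ e := le_trans (le_totalDegree hmem) hdegp
      have h2 : β s ≤ β.sum fun _ n => n := by
        rcases Nat.eq_zero_or_pos (β s) with h | h
        · omega
        · exact Finset.single_le_sum (fun _ _ => Nat.zero_le _)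
            (Finsupp.mem_support_iff.mpr (by omega))
      omega
  set emb : (Fin N → Fin (t+1)) → (Fin N →₀ ℕ) :=
    fun a => Finsupp.equivFunOnFinite.symm (fun i => (a i : ℕ)) with hemb
  have hembinj : Function.Injective emb := by
    intro a b h
    have := Finsupp.equivFunOnFinite.symm.injective h
    funext i
    exact Fin.val_injective (congrFun this i)
  refine ⟨∑ a, c a • monomial (emb a) (1:k), ?_, ?_⟩
  · intro hQ
    have h0 := congrArg (coeff (emb a₀)) hQ
    rw [MvPolynomial.coeff_zero, MvPolynomial.coeff_sum] at h0
    simp only [MvPolynomial.coeff_smul, MvPolynomial.coeff_monomial] at h0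
    rw [Finset.sum_eq_single a₀ (fun b _ hb => by
        rw [if_neg (fun h => hb (hembinj h)), smul_zero])
      (fun h => absurd (Finset.mem_univ a₀) h)] at h0
    rw [if_pos rfl, smul_eq_mul, mul_one] at h0
    exact hc h0
  · rw [map_sum]
    have : ∀ a, MvPolynomial.aeval z (c a • monomial (emb a) (1:k)) = c a • G a := by
      intro a
      rw [map_smul, aeval_monomial, map_one, one_mul]
      congr 1
      rw [Finsupp.prod_fintype _ _ (fun i => pow_zero _)]
      exact Finset.prod_congr rfl fun i _ => by simp [hemb]
    rw [Finset.sum_congr rfl fun a _ => this a, ← hp, hp0]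
open MvPolynomial Finset in
lemma no_long_chain {k R : Type*} [Field k] [CommRing R] [Algebra k R]
    (N : ℕ) (P : ℕ → Ideal R) (hpr : ∀ i, (P i).IsPrime) (hle : ∀ i, P i ≤ P (i+1))
    (x : Fin N → R) (hx1 : ∀ i : Fin N, x i ∈ P (i.1+1)) (hx0 : ∀ i : Fin N, x i ∉ P i.1)
    (Q : MvPolynomial (Fin N) k) (hQ : Q ≠ 0) (hmem : MvPolynomial.aeval x Q ∈ P 0) :
    False := by
  classical
  set x' : ℕ → R := fun i => if h : i < N then x ⟨i, h⟩ else 1 with hx'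
  set xpow : (Fin N →₀ ℕ) → R := fun β => ∏ i, x i ^ β i with hxpow
  -- lex-minimal exponent of Q
  have hne : Q.support.Nonempty := by
    rw [Finset.nonempty_iff_ne_empty, Ne, MvPolynomial.support_eq_empty]; exact hQ
  have hneL : (Q.support.image (toLex : (Fin N →₀ ℕ) → Lex (Fin N →₀ ℕ))).Nonempty :=
    hne.image _
  obtain ⟨A, hA, hAeq⟩ : ∃ A ∈ Q.support,
      toLex A = (Q.support.image (toLex : (Fin N →₀ ℕ) → Lex (Fin N →₀ ℕ))).min' hneL := by
    have h := Finset.min'_mem _ hneL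
    obtain ⟨A, hA', hAe⟩ := Finset.mem_image.mp h
    exact ⟨A, hA', hAe⟩
  have hmin : ∀ β ∈ Q.support, β ≠ A → toLex A < toLex β := by
    intro β hβ hne'
    have hle' : toLex A ≤ toLex β := by
      rw [hAeq]; exact Finset.min'_le _ _ (Finset.mem_image_of_mem _ hβ)
    exact hle'.lt_of_ne fun h => hne' ((toLex.injective h).symm)
  set A' : ℕ → ℕ := fun i => if h : i < N then A ⟨i, h⟩ else 0 with hA'
  set g : Fin N → R :=
    fun j => (∏ l ∈ range j.1, x' l ^ A' l) * x' j.1 ^ (A' j.1 + 1) with hg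
  set J : Ideal R := Ideal.span (Set.range g) with hJ
  -- conversion of Fin-indexed monomials to range-indexed products
  have hconv : ∀ β : Fin N →₀ ℕ, ∀ γ : ℕ → ℕ, (∀ i : Fin N, γ i.1 = β i) →
      xpow β = ∏ i ∈ range N, x' i ^ γ i := by
    intro β γ hγ
    rw [hxpow]
    calc (∏ i : Fin N, x i ^ β i) = ∏ i : Fin N, (fun l => x' l ^ γ l) i.1 := by
          refine Finset.prod_congr rfl fun i _ => ?_
          simp only [hx', i.isLt, dif_pos, Fin.eta, hγ i]
      _ = ∏ i ∈ range N, x' i ^ γ i := Fin.prod_univ_eq_prod_range (fun l => x' l ^ γ l) N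
  have hxA : xpow A = ∏ i ∈ range N, x' i ^ A' i :=
    hconv A A' (fun i => by simp only [hA', i.isLt, dif_pos, Fin.eta])
  -- monomials lex-above A lie in J
  have hβJ : ∀ β ∈ Q.support, β ≠ A → xpow β ∈ J := by
    intro β hβ hne'
    obtain ⟨j, h1, h2⟩ := (Finsupp.lex_def).mp (hmin β hβ hne')
    set β' : ℕ → ℕ := fun i => if h : i < N then β ⟨i, h⟩ else 0 with hβ'
    have hxβ : xpow β = ∏ i ∈ range N, x' i ^ β' i :=
      hconv β β' (fun i => by simp only [hβ', i.isLt, dif_pos, Fin.eta])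
    have hsplit : xpow β = ((∏ l ∈ range j.1, x' l ^ A' l) * x' j.1 ^ (A' j.1 + 1)) *
        (x' j.1 ^ (β' j.1 - A' j.1 - 1) * ∏ i ∈ Finset.Ico (j.1+1) N, x' i ^ β' i) := by
      rw [hxβ, ← Finset.prod_range_mul_prod_Ico _ (Nat.succ_le_of_lt j.isLt),
        Finset.prod_range_succ]
      have e1 : ∏ l ∈ range j.1, x' l ^ β' l = ∏ l ∈ range j.1, x' l ^ A' l := by
        refine Finset.prod_congr rfl fun l hl => ?_
        have hlN : l < N := lt_trans (Finset.mem_range.mp hl) j.isLt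
        have : A ⟨l, hlN⟩ = β ⟨l, hlN⟩ := h1 ⟨l, hlN⟩ (by
          rw [Fin.lt_def]; exact Finset.mem_range.mp hl)
        simp only [hβ', hA', hlN, dif_pos, this]
      have e2 : x' j.1 ^ β' j.1 = x' j.1 ^ (A' j.1 + 1) * x' j.1 ^ (β' j.1 - A' j.1 - 1) := by
        rw [← pow_add]
        congr 1
        have hA'j : A' j.1 = A j := by simp only [hA', j.isLt, dif_pos, Fin.eta]
        have hβ'j : β' j.1 = β j := by simp only [hβ', j.isLt, dif_pos, Fin.eta]
        have h2' : A j < β j := h2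
        omega
      rw [e1, e2]; ring
    rw [hsplit]
    exact Ideal.mul_mem_right _ _ (Ideal.subset_span ⟨j, rfl⟩)
  -- expansion of aeval
  have hexp : MvPolynomial.aeval x Q
      = ∑ β ∈ Q.support, algebraMap k R (MvPolynomial.coeff β Q) * xpow β := by
    rw [MvPolynomial.aeval_def, MvPolynomial.eval₂_eq]
    refine Finset.sum_congr rfl fun β _ => ?_
    rw [hxpow]
    congr 1
    exact Finset.prod_subset (Finset.subset_univ _) (fun i _ hi => by
      rw [Finsupp.notMem_support_iff.mp hi, pow_zero])
  have hc : MvPolynomial.coeff A Q ≠ 0 := MvPolynomial.mem_support_iff.mp hA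
  have h6 : algebraMap k R (MvPolynomial.coeff A Q) * xpow A ∈ P 0 ⊔ J := by
    have hsplit : algebraMap k R (MvPolynomial.coeff A Q) * xpow A
        = MvPolynomial.aeval x Q
          - ∑ β ∈ Q.support.erase A, algebraMap k R (MvPolynomial.coeff β Q) * xpow β := by
      rw [hexp, ← Finset.add_sum_erase _ _ hA]; ring
    rw [hsplit]
    refine Submodule.sub_mem _ (Ideal.mem_sup_left hmem) (Ideal.mem_sup_right ?_)
    refine Ideal.sum_mem _ fun β hβ => Ideal.mul_mem_left _ _ ?_
    exact hβJ β (Finset.mem_of_mem_erase hβ) (Finset.ne_of_mem_erase hβ)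
  have h7 : xpow A ∈ P 0 ⊔ J := by
    have h := Ideal.mul_mem_left _ (algebraMap k R (MvPolynomial.coeff A Q)⁻¹) h6
    rwa [← mul_assoc, ← map_mul, inv_mul_cancel₀ hc, map_one, one_mul] at h
  obtain ⟨y, hy, w, hw, hyw⟩ := Submodule.mem_sup.mp h7
  obtain ⟨bc, hbc⟩ := (Submodule.mem_span_range_iff_exists_fun R).mp hw
  set b' : ℕ → R := fun i => if h : i < N then -(bc ⟨i, h⟩) else 0 with hb'
  have hEP : (∏ i ∈ range N, x' i ^ A' i) +
      ∑ j ∈ range N, b' j * ((∏ l ∈ range j, x' l ^ A' l) * x' j ^ (A' j + 1)) ∈ P 0 := by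
    have hsum2 : ∑ j ∈ range N, b' j * ((∏ l ∈ range j, x' l ^ A' l) * x' j ^ (A' j + 1))
        = -w := by
      rw [← hbc]
      rw [← Fin.sum_univ_eq_sum_range (fun jn =>
        b' jn * ((∏ l ∈ range jn, x' l ^ A' l) * x' jn ^ (A' jn + 1))) N]
      rw [← Finset.sum_neg_distrib]
      refine Finset.sum_congr rfl fun j _ => ?_
      simp only [hb', j.isLt, dif_pos, Fin.eta, smul_eq_mul, hg]
      ring
    rw [hsum2, ← hxA]
    have : xpow A - w = y := by rw [← hyw]; ring
    rw [sub_eq_add_neg] at this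
    rw [this]
    exact hy
  exact core_lemma N P x' b' A' hpr hle
    (fun i hi => by simpa only [hx', hi, dif_pos] using hx1 ⟨i, hi⟩)
    (fun i hi => by simpa only [hx', hi, dif_pos] using hx0 ⟨i, hi⟩)
    hEP

open MvPolynomial in
/-- Parameter space for the `j`-th row parametrization. -/
abbrev NTau (n m : ℕ) (j : Fin n) : Type := ({i : Fin n // i ≠ j} × Fin m) ⊕ {i : Fin n // i ≠ j}

open MvPolynomial in
/-- Generators of the `j`-th parametrization: row `j` is a linear combination of the others. -/
noncomputable def NFgen (k : Type*) [Field k] (n m : ℕ) (j : Fin n) :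
    (Fin n × Fin m) → MvPolynomial (NTau n m j) k := fun p =>
  if h : p.1 = j then ∑ i' : {i : Fin n // i ≠ j}, X (Sum.inr i') * X (Sum.inl (i', p.2))
  else X (Sum.inl (⟨p.1, h⟩, p.2))

lemma card_NTau {n m : ℕ} (j : Fin n) : Fintype.card (NTau n m j) = (n-1) * m + (n-1) := by
  have h1 : Fintype.card {i : Fin n // i ≠ j} = n - 1 := by
    have := Fintype.card_subtype_compl (fun i : Fin n => i = j)
    simp only [Fintype.card_subtype_eq, Fintype.card_fin] at this
    exact this
  simp [Fintype.card_sum, Fintype.card_prod, h1]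

open MvPolynomial Finset in
lemma geo_lemma {k : Type*} [Field k] {n m : ℕ}
    (f : MvPolynomial (Fin n × Fin m) k)
    (hf : ∀ j : Fin n, MvPolynomial.aeval (NFgen k n m j) f = 0)
    {x : Fin n × Fin m → k} (hx : (Matrix.of fun i j => x (i, j)).rank < n) :
    MvPolynomial.eval x f = 0 := by
  classical
  set M : Matrix (Fin n) (Fin m) k := Matrix.of fun i j => x (i, j) with hM
  have hdep : ¬ LinearIndependent k (fun i : Fin n => M i) := by
    intro h
    have h2 : M.rank = n := by
      have := h.rank_matrix
      rw [Fintype.card_fin] at this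
      exact this
    omega
  obtain ⟨gc, hsum, j, hgj⟩ := Fintype.not_linearIndependent_iff.mp hdep
  set cpar : {i : Fin n // i ≠ j} → k := fun i => -(gc i.1) * (gc j)⁻¹ with hcpar
  have hrow : ∀ l : Fin m, M j l = ∑ i' : {i : Fin n // i ≠ j}, cpar i' * M i'.1 l := by
    intro l
    have hsuml : ∑ i, gc i * M i l = 0 := by
      have := congrFun hsum l
      simpa [Finset.sum_apply] using this
    have h1 : gc j * M j l = -∑ i ∈ univ.erase j, gc i * M i l := by
      refine eq_neg_of_add_eq_zero_left ?_
      rw [Finset.add_sum_erase Finset.univ (fun i => gc i * M i l) (Finset.mem_univ j)]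
      exact hsuml
    calc M j l = (gc j)⁻¹ * (gc j * M j l) := by
          rw [← mul_assoc, inv_mul_cancel₀ hgj, one_mul]
      _ = ∑ i ∈ univ.erase j, (-(gc i) * (gc j)⁻¹) * M i l := by
          rw [h1, ← Finset.sum_neg_distrib, Finset.mul_sum]
          exact Finset.sum_congr rfl fun i _ => by ring
      _ = ∑ i' : {i : Fin n // i ≠ j}, -(gc i'.1) * (gc j)⁻¹ * M i'.1 l :=
          Finset.sum_subtype (univ.erase j) (fun x => by simp)
            (fun i => -(gc i) * (gc j)⁻¹ * M i l)
      _ = ∑ i' : {i : Fin n // i ≠ j}, cpar i' * M i'.1 l := rfl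
  set par : NTau n m j → k := Sum.elim (fun q => x (q.1.1, q.2)) cpar with hpar
  have hcomp : ∀ s : Fin n × Fin m, MvPolynomial.eval par (NFgen k n m j s) = x s := by
    rintro ⟨i, l⟩
    by_cases h : i = j
    · subst h
      rw [NFgen, dif_pos rfl, map_sum]
      simp only [map_mul, eval_X]
      have : ∀ i' : {i' : Fin n // i' ≠ i},
          par (Sum.inr i') * par (Sum.inl (i', l)) = cpar i' * M i'.1 l := fun i' => rfl
      rw [Finset.sum_congr rfl fun i' _ => this i']
      exact (hrow l).symm
    · rw [NFgen, dif_neg h, eval_X]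
      simp only [hpar, Sum.elim_inl]
  have heq : (MvPolynomial.eval par).comp
      ((MvPolynomial.aeval (NFgen k n m j) : MvPolynomial (Fin n × Fin m) k →ₐ[k]
        MvPolynomial (NTau n m j) k) : MvPolynomial (Fin n × Fin m) k →+* MvPolynomial (NTau n m j) k)
      = MvPolynomial.eval x := by
    apply MvPolynomial.ringHom_ext
    · intro a; simp
    · intro s; simp [hcomp s]
  have h2 := RingHom.congr_fun heq f
  rw [RingHom.coe_comp, Function.comp_apply] at h2
  rw [← h2]
  show MvPolynomial.eval par ((MvPolynomial.aeval (NFgen k n m j)) f) = 0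
  rw [hf j, map_zero]

open MvPolynomial in
lemma geo2_lemma {k : Type*} [Field k] {n m : ℕ}
    (P : Ideal (MvPolynomial (Fin n × Fin m) k)) (hP : P.IsPrime)
    (hV : MvPolynomial.vanishingIdeal k
      {x : Fin n × Fin m → k | (Matrix.of fun i j => x (i, j)).rank < n} ≤ P) :
    ∃ j : Fin n, RingHom.ker (MvPolynomial.aeval (NFgen k n m j) :
      MvPolynomial (Fin n × Fin m) k →ₐ[k] MvPolynomial (NTau n m j) k).toRingHom ≤ P := by
  have hinf : (Finset.univ.inf fun j : Fin n => RingHom.ker (MvPolynomial.aeval (NFgen k n m j) :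
      MvPolynomial (Fin n × Fin m) k →ₐ[k] MvPolynomial (NTau n m j) k).toRingHom) ≤ P := by
    refine le_trans ?_ hV
    intro f hf
    rw [MvPolynomial.mem_vanishingIdeal_iff]
    intro x hx
    refine geo_lemma f (fun j => ?_) hx
    exact RingHom.mem_ker.mp ((Submodule.mem_finsetInf.mp hf) j (Finset.mem_univ j))
  obtain ⟨j, _, hj⟩ := (Ideal.IsPrime.inf_le' hP).mp hinf
  exact ⟨j, hj⟩

open MvPolynomial Matrix in
lemma closed_lemma {k : Type*} [Field k] {n m : ℕ} (hnm : n ≤ m) :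
    ∃ I : Ideal (MvPolynomial (Fin n × Fin m) k),
      {x : Fin n × Fin m → k | (Matrix.of fun i j => x (i, j)).rank < n} =
        MvPolynomial.zeroLocus k I := by
  classical
  refine ⟨Ideal.span (Set.range fun c : Fin n → Fin m =>
    (Matrix.of fun i j : Fin n =>
      (MvPolynomial.X (i, c j) : MvPolynomial (Fin n × Fin m) k)).det), ?_⟩
  ext x
  rw [Set.mem_setOf_eq, MvPolynomial.zeroLocus_span, Set.mem_setOf_eq]
  set M : Matrix (Fin n) (Fin m) k := Matrix.of fun i j => x (i, j) with hM
  have hdet : ∀ c : Fin n → Fin m,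
      MvPolynomial.eval x ((Matrix.of fun i j : Fin n =>
        (MvPolynomial.X (i, c j) : MvPolynomial (Fin n × Fin m) k)).det)
      = (M.submatrix id c).det := by
    intro c
    rw [RingHom.map_det]
    congr 1
    ext i j
    simp [Matrix.map_apply, hM]
  constructor
  · rintro hrank p ⟨c, rfl⟩
    simp only [MvPolynomial.coe_aeval_eq_eval]
    rw [show MvPolynomial.aeval x _ = _ from hdet c]
    by_contra hne
    have hunit : IsUnit (M.submatrix id c) :=
      (Matrix.isUnit_iff_isUnit_det _).mpr (isUnit_iff_ne_zero.mpr hne)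
    have hrows : LinearIndependent k (fun i => (M.submatrix id c) i) :=
      Matrix.linearIndependent_rows_iff_isUnit.mpr hunit
    have hrowsM : LinearIndependent k (fun i : Fin n => M i) := by
      refine LinearIndependent.of_comp (LinearMap.funLeft k k c) ?_
      exact hrows
    have : M.rank = n := by
      have := hrowsM.rank_matrix
      rw [Fintype.card_fin] at this
      exact this
    omega
  · intro hall
    by_contra hrank
    have hrankn : M.rank = n := by
      have h1 : M.rank ≤ n := by
        have := M.rank_le_card_height
        rwa [Fintype.card_fin] at this
      omega
    have hspan : Submodule.span k (Set.range Mᵀ) = ⊤ := by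
      apply Submodule.eq_top_of_finrank_eq
      rw [← show Set.range M.col = Set.range Mᵀ from rfl, ← Matrix.rank_eq_finrank_span_cols, hrankn,
        Module.finrank_fintype_fun_eq_card, Fintype.card_fin]
    obtain ⟨b, hbsub, hbspan, hbind⟩ := exists_linearIndependent k (Set.range Mᵀ)
    rw [hspan] at hbspan
    have hBtop : ⊤ ≤ Submodule.span k (Set.range ((↑) : b → (Fin n → k))) := by
      rw [Subtype.range_coe, hbspan]
    let B : Module.Basis b k (Fin n → k) := Module.Basis.mk hbind hBtop
    haveI : Fintype b := FiniteDimensional.fintypeBasisIndex B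
    have hbcard : Fintype.card b = n := by
      have := Module.finrank_eq_card_basis B
      rw [Module.finrank_fintype_fun_eq_card, Fintype.card_fin] at this
      exact this.symm
    let e : Fin n ≃ b := (Fintype.equivFinOfCardEq hbcard).symm
    have hchoice : ∀ v : b, ∃ c0 : Fin m, Mᵀ c0 = (v : Fin n → k) := fun v => hbsub v.2
    choose cf hcf using hchoice
    set c : Fin n → Fin m := fun i => cf (e i) with hc
    have hcols : LinearIndependent k (fun i : Fin n => (M.submatrix id c)ᵀ i) := by
      have h0 : (fun i : Fin n => (M.submatrix id c)ᵀ i)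
          = fun i : Fin n => ((e i : Fin n → k)) := by
        funext i
        rw [← hcf (e i)]
        rfl
      rw [h0]
      exact hbind.comp e e.injective
    have hunit : IsUnit (M.submatrix id c) :=
      Matrix.linearIndependent_cols_iff_isUnit.mp hcols
    have hdet0 := hall _ ⟨c, rfl⟩
    simp only [MvPolynomial.coe_aeval_eq_eval] at hdet0
    rw [show MvPolynomial.aeval x _ = _ from hdet c] at hdet0
    exact isUnit_iff_ne_zero.mp ((Matrix.isUnit_iff_isUnit_det _).mp hunit) hdet0

lemma arith_lemma {n m : ℕ} (hn : 1 ≤ n) (hnm : n < m) :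
    (n-1) * m + (n-1) < n * m + n - m - 1 + 1 := by
  obtain ⟨n', rfl⟩ : ∃ n', n = n' + 1 := ⟨n - 1, by omega⟩
  have h : (n' + 1) * m = n' * m + m := by ring
  simp only [Nat.add_sub_cancel]
  rw [h]
  generalize n' * m = a
  omega

/-- Over an algebraically closed field `k`, for `1 ≤ n < m`, the set of `n × m` matrices of
rank `< n` is Zariski-closed in the affine space `k^{nm}` of matrices, and its dimension
(the Krull dimension of its coordinate ring) is at most `nm - (1 + m - n)`, i.e. it has
codimension at least `1 + m - n`. -/
theorem stmt6 (k : Type*) [Field k] [IsAlgClosed k] (n m : ℕ) (hn : 1 ≤ n) (hnm : n < m) :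
    (∃ I : Ideal (MvPolynomial (Fin n × Fin m) k),
        {x : Fin n × Fin m → k | (Matrix.of fun i j => x (i, j)).rank < n} =
          MvPolynomial.zeroLocus k I) ∧
    ringKrullDim (MvPolynomial (Fin n × Fin m) k ⧸
        MvPolynomial.vanishingIdeal k
          {x : Fin n × Fin m → k | (Matrix.of fun i j => x (i, j)).rank < n}) ≤
      ((n * m + n - m - 1 : ℕ) : WithBot ℕ∞) := by
  classical
  constructor
  · exact closed_lemma (le_of_lt hnm)
  · set V : Set (Fin n × Fin m → k) :=
      {x : Fin n × Fin m → k | (Matrix.of fun i j => x (i, j)).rank < n} with hVdef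
    set I : Ideal (MvPolynomial (Fin n × Fin m) k) := MvPolynomial.vanishingIdeal k V with hIdef
    show Order.krullDim (PrimeSpectrum (MvPolynomial (Fin n × Fin m) k ⧸ I)) ≤ _
    refine iSup_le fun p => ?_
    have hlen : p.length ≤ n * m + n - m - 1 := by
      by_contra hlen
      push_neg at hlen
      set N : ℕ := (n * m + n - m - 1) + 1 with hN
      set mk : MvPolynomial (Fin n × Fin m) k →+* (MvPolynomial (Fin n × Fin m) k ⧸ I) :=
        (Ideal.Quotient.mk I : MvPolynomial (Fin n × Fin m) k →+* _) with hmk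
      set PP : ℕ → Ideal (MvPolynomial (Fin n × Fin m) k) := fun i =>
        Ideal.comap mk (p ⟨min i p.length, Nat.lt_succ_of_le (Nat.min_le_right _ _)⟩).asIdeal
        with hPP
      have hpr : ∀ i, (PP i).IsPrime := fun i => Ideal.IsPrime.comap _
      have hple : ∀ i, PP i ≤ PP (i+1) := by
        intro i
        refine Ideal.comap_mono ?_
        rw [PrimeSpectrum.asIdeal_le_asIdeal]
        exact p.strictMono.monotone (Fin.mk_le_mk.mpr (by omega))
      have hex : ∀ i : Fin N, ∃ a, a ∈ PP (i.1+1) ∧ a ∉ PP i.1 := by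
        intro i
        have hi1 : i.1 < p.length := by omega
        have hlt : PP i.1 < PP (i.1+1) := by
          refine lt_of_le_of_ne (hple i.1) ?_
          intro heq
          have hAeq := Ideal.comap_injective_of_surjective mk Ideal.Quotient.mk_surjective heq
          have hplt := p.strictMono (show (⟨min i.1 p.length,
              Nat.lt_succ_of_le (Nat.min_le_right _ _)⟩ : Fin (p.length+1)) <
              ⟨min (i.1+1) p.length, Nat.lt_succ_of_le (Nat.min_le_right _ _)⟩
            from Fin.mk_lt_mk.mpr (by omega))
          rw [← PrimeSpectrum.asIdeal_lt_asIdeal] at hplt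
          rw [PrimeSpectrum.ext_iff.mpr hAeq] at hplt
          exact lt_irrefl _ hplt
        exact SetLike.exists_of_lt hlt
      choose xf hx1 hx0 using hex
      have hVP : MvPolynomial.vanishingIdeal k V ≤ PP 0 := by
        intro f hf
        show f ∈ Ideal.comap mk _
        rw [Ideal.mem_comap]
        have h0 : mk f = 0 := Ideal.Quotient.eq_zero_iff_mem.mpr hf
        rw [h0]
        exact Submodule.zero_mem _
      obtain ⟨j, hj⟩ := geo2_lemma (PP 0) (hpr 0) hVP
      obtain ⟨Q, hQ0, hQz⟩ := count_lemma (k := k) N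
        (lt_of_eq_of_lt (card_NTau j) (arith_lemma hn hnm))
        (fun i => MvPolynomial.aeval (NFgen k n m j) (xf i))
      have hker : MvPolynomial.aeval xf Q ∈ PP 0 := by
        refine hj ?_
        rw [RingHom.mem_ker]
        show (MvPolynomial.aeval (NFgen k n m j)) ((MvPolynomial.aeval xf) Q) = 0
        rw [← AlgHom.comp_apply, MvPolynomial.comp_aeval]
        exact hQz
      exact no_long_chain N PP hpr hple xf hx1 hx0 Q hQ0 hker
    exact_mod_cast hlen
end

section
/- Let c_{n,i} be the coefficients of the formal power series exp(Σ_{i=1}^∞ n^{θ(i)} t^i / i), where θ(i) is the largest odd divisor of i and n ≥ 2 is an integer. Then limsup_{i→∞} (log c_{n,i})/i ≥ log n. -/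
/-- Let `θ i` be the largest odd divisor of `i ≥ 1` and let `c i = c_{n,i}` be the
coefficients of the formal power series `exp(Σ_{i≥1} n^{θ(i)} t^i / i)` (characterized by
`c 0 = 1` and the differential recursion `(i+1) c_{i+1} = Σ_{j=0}^i n^{θ(j+1)} c_{i-j}`,
obtained from `exp(g)' = g'·exp(g)`).  Then `limsup_{i→∞} (log c_i)/i ≥ log n`. -/
theorem stmt16 (n : ℕ) (hn : 2 ≤ n) (θ : ℕ → ℕ)
    (hθ : ∀ i, 1 ≤ i → Odd (θ i) ∧ θ i ∣ i ∧ ∀ e : ℕ, Odd e → e ∣ i → e ≤ θ i)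
    (c : ℕ → ℝ) (hc0 : c 0 = 1)
    (hc : ∀ i : ℕ, ((i : ℝ) + 1) * c (i + 1) =
      ∑ j ∈ Finset.range (i + 1), (n : ℝ) ^ θ (j + 1) * c (i - j)) :
    Real.log n ≤ Filter.limsup (fun i : ℕ => Real.log (c i) / (i : ℝ)) Filter.atTop := by
  have hn2 : (2:ℝ) ≤ (n:ℝ) := by exact_mod_cast hn
  have hn0 : (0:ℝ) < n := by linarith
  -- positivity of coefficients
  have hpos : ∀ i, 0 < c i := by
    intro i
    induction i using Nat.strong_induction_on with
    | _ i ih =>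
      match i with
      | 0 => rw [hc0]; norm_num
      | Nat.succ k =>
        have h := hc k
        have hsum : 0 < ∑ j ∈ Finset.range (k+1), (n:ℝ)^θ (j+1) * c (k - j) := by
          apply Finset.sum_pos
          · intro j _
            exact mul_pos (pow_pos hn0 _) (ih (k - j) (by omega))
          · exact ⟨0, Finset.mem_range.mpr (Nat.succ_pos k)⟩
        have hk : (0:ℝ) < (k:ℝ) + 1 := by positivity
        nlinarith [h, hsum, hk]
  -- upper bound c i ≤ (2n)^i
  have hub : ∀ i, c i ≤ (2*(n:ℝ))^i := by
    intro i
    induction i using Nat.strong_induction_on with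
    | _ i ih =>
      match i with
      | 0 => rw [hc0]; norm_num
      | Nat.succ k =>
        have h := hc k
        have hterm : ∀ j ∈ Finset.range (k+1),
            (n:ℝ)^θ (j+1) * c (k - j) ≤ (2*(n:ℝ))^(k+1) := by
          intro j hj
          have hjk : j ≤ k := by
            have := Finset.mem_range.mp hj; omega
          have h1 : (n:ℝ)^θ (j+1) ≤ (2*(n:ℝ))^(j+1) := by
            have hd : θ (j+1) ∣ (j+1) := (hθ (j+1) (by omega)).2.1
            have hle : θ (j+1) ≤ j+1 := Nat.le_of_dvd (by omega) hd
            calc (n:ℝ)^θ (j+1) ≤ (n:ℝ)^(j+1) :=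
                  pow_le_pow_right₀ (by linarith) hle
              _ ≤ (2*(n:ℝ))^(j+1) := by
                  apply pow_le_pow_left₀ (by linarith)
                  linarith
          have h2 : c (k - j) ≤ (2*(n:ℝ))^(k - j) := ih (k - j) (by omega)
          calc (n:ℝ)^θ (j+1) * c (k - j) ≤ (2*(n:ℝ))^(j+1) * (2*(n:ℝ))^(k-j) := by
                apply mul_le_mul h1 h2 (le_of_lt (hpos _))
                positivity
            _ = (2*(n:ℝ))^(k+1) := by
                rw [← pow_add]
                congr 1
                omega
        have hsum : ∑ j ∈ Finset.range (k+1), (n:ℝ)^θ (j+1) * c (k - j)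
            ≤ (k+1) * (2*(n:ℝ))^(k+1) := by
          calc ∑ j ∈ Finset.range (k+1), (n:ℝ)^θ (j+1) * c (k - j)
              ≤ ∑ _j ∈ Finset.range (k+1), (2*(n:ℝ))^(k+1) :=
                Finset.sum_le_sum hterm
            _ = (k+1) * (2*(n:ℝ))^(k+1) := by
                rw [Finset.sum_const, Finset.card_range]; push_cast; ring
        have hk : (0:ℝ) < (k:ℝ) + 1 := by positivity
        have : ((k:ℝ)+1) * c (k+1) ≤ ((k:ℝ)+1) * (2*(n:ℝ))^(k+1) := by
          rw [h]; push_cast at hsum ⊢; linarith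
        have := (mul_le_mul_iff_right₀ hk).mp this
        exact_mod_cast this
  -- lower bound at odd indices
  have hlow : ∀ k : ℕ, (n:ℝ)^(2*k+1) ≤ ((2*k:ℝ)+1) * c (2*k+1) := by
    intro k
    have h := hc (2*k)
    have hθeq : θ (2*k+1) = 2*k+1 := by
      obtain ⟨hodd, hdvd, hmax⟩ := hθ (2*k+1) (by omega)
      have h1 : θ (2*k+1) ≤ 2*k+1 := Nat.le_of_dvd (by omega) hdvd
      have h2 : 2*k+1 ≤ θ (2*k+1) := hmax _ ⟨k, by ring⟩ dvd_rfl
      omega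
    have hmem : 2*k ∈ Finset.range (2*k+1) := Finset.mem_range.mpr (by omega)
    have hsingle : (n:ℝ)^θ (2*k+1) * c (2*k - 2*k) ≤
        ∑ j ∈ Finset.range (2*k+1), (n:ℝ)^θ (j+1) * c (2*k - j) :=
      Finset.single_le_sum (f := fun j => (n:ℝ)^θ (j+1) * c (2*k - j))
        (fun j _ => le_of_lt (mul_pos (pow_pos hn0 _) (hpos _))) hmem
    rw [Nat.sub_self, hc0, mul_one, hθeq] at hsingle
    calc (n:ℝ)^(2*k+1) ≤ ∑ j ∈ Finset.range (2*k+1), (n:ℝ)^θ (j+1) * c (2*k - j) := hsingle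
      _ = ((2*k:ℝ)+1) * c (2*k+1) := by rw [← h]; push_cast; ring
  -- boundedness of the sequence
  have hbdd : Filter.IsBoundedUnder (· ≤ ·) Filter.atTop
      (fun i : ℕ => Real.log (c i) / (i : ℝ)) := by
    refine ⟨Real.log (2*(n:ℝ)), Filter.eventually_map.mpr (Filter.Eventually.of_forall ?_)⟩
    intro i
    show Real.log (c i) / (i:ℝ) ≤ Real.log (2*(n:ℝ))
    have hlog2n : 0 ≤ Real.log (2*(n:ℝ)) := Real.log_nonneg (by linarith)
    rcases Nat.eq_zero_or_pos i with h0 | hi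
    · simp [h0, hlog2n]
    · have hi0 : (0:ℝ) < i := by exact_mod_cast hi
      rw [div_le_iff₀ hi0]
      calc Real.log (c i) ≤ Real.log ((2*(n:ℝ))^i) :=
            Real.log_le_log (hpos i) (hub i)
        _ = i * Real.log (2*(n:ℝ)) := by rw [Real.log_pow]
        _ = Real.log (2*(n:ℝ)) * i := by ring
  -- conclude
  apply le_of_forall_sub_le
  intro ε hε
  apply Filter.le_limsup_of_frequently_le _ hbdd
  rw [Filter.frequently_atTop]
  intro N
  obtain ⟨K, hK⟩ : ∃ K : ℕ, (4/ε^2 : ℝ) ≤ K := exists_nat_ge _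
  refine ⟨2*(max N K)+1, by omega, ?_⟩
  set k := max N K with hkdef
  set m : ℕ := 2*k+1 with hmdef
  have hm0 : (0:ℝ) < (m:ℝ) := by positivity
  have hm1 : (1:ℝ) ≤ (m:ℝ) := by exact_mod_cast Nat.one_le_iff_ne_zero.mpr (by omega)
  -- log m / m ≤ ε
  have hlogm : Real.log m / m ≤ ε := by
    have hsq : Real.log m ≤ 2 * Real.sqrt m := by
      have h1 : Real.log (Real.sqrt m) ≤ Real.sqrt m - 1 :=
        Real.log_le_sub_one_of_pos (Real.sqrt_pos.mpr hm0)
      rw [Real.log_sqrt (le_of_lt hm0)] at h1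
      linarith
    have hmK : (4/ε^2 : ℝ) ≤ m := by
      have : (K:ℝ) ≤ m := by
        have : K ≤ m := by omega
        exact_mod_cast this
      linarith
    have hsqrt : 2/ε ≤ Real.sqrt m := by
      have h4 : Real.sqrt (4/ε^2) ≤ Real.sqrt m := Real.sqrt_le_sqrt hmK
      have : Real.sqrt (4/ε^2) = 2/ε := by
        rw [show (4/ε^2 : ℝ) = (2/ε)^2 by ring]
        exact Real.sqrt_sq (by positivity)
      linarith
    have hsm : (0:ℝ) < Real.sqrt m := Real.sqrt_pos.mpr hm0
    rw [div_le_iff₀ hm0]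
    have hms : (m:ℝ) = Real.sqrt m * Real.sqrt m := (Real.mul_self_sqrt (le_of_lt hm0)).symm
    calc Real.log m ≤ 2 * Real.sqrt m := hsq
      _ ≤ (ε * Real.sqrt m) * Real.sqrt m := by
          have : 2 ≤ ε * Real.sqrt m := by
            rw [div_le_iff₀ hε] at hsqrt
            linarith [hsqrt]
          nlinarith [hsm]
      _ = ε * (Real.sqrt m * Real.sqrt m) := by ring
      _ = ε * m := by rw [← hms]
  -- lower bound for log c m / m
  have hcm : (n:ℝ)^m / m ≤ c m := by
    rw [div_le_iff₀ hm0]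
    show (n:ℝ)^(2*k+1) ≤ c (2*k+1) * ((2*k+1 : ℕ):ℝ)
    have := hlow k
    push_cast
    linarith
  have hlogc : (m:ℝ) * Real.log n - Real.log m ≤ Real.log (c m) := by
    have h1 : Real.log ((n:ℝ)^m / m) ≤ Real.log (c m) :=
      Real.log_le_log (by positivity) hcm
    rwa [Real.log_div (by positivity) (ne_of_gt hm0), Real.log_pow] at h1
  show Real.log n - ε ≤ Real.log (c m) / (m:ℝ)
  rw [div_le_iff₀ hm0] at hlogm
  rw [le_div_iff₀ hm0]
  calc (Real.log n - ε) * m = m * Real.log n - ε * m := by ring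
    _ ≤ m * Real.log n - Real.log m := by linarith
    _ ≤ Real.log (c m) := hlogc
end

section
/- Let n ≥ 2 be an integer. The series Σ_{i=1}^∞ n^{θ(i)} t^i / i, where θ(i) is the largest odd divisor of i, tends to +∞ as t increases to 1/n (t real, 0 < t < 1/n). -/
/-- Let `θ i` be the largest odd divisor of `i ≥ 1` and `n ≥ 2` an integer.  Then the series
`Σ_{i=1}^∞ n^{θ(i)} t^i / i` tends to `+∞` as the real number `t` increases to `1/n`
(through `0 < t < 1/n`). -/
theorem stmt17 (n : ℕ) (hn : 2 ≤ n) (θ : ℕ → ℕ)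
    (hθ : ∀ i, 1 ≤ i → Odd (θ i) ∧ θ i ∣ i ∧ ∀ e : ℕ, Odd e → e ∣ i → e ≤ θ i) :
    Filter.Tendsto
      (fun t : ℝ => ∑' i : ℕ, (n : ℝ) ^ θ (i + 1) * t ^ (i + 1) / ((i : ℝ) + 1))
      (nhdsWithin (1 / (n : ℝ)) (Set.Ioo 0 (1 / (n : ℝ)))) Filter.atTop := by
  have hn0 : (0 : ℝ) < n := by positivity
  have hn1 : (1 : ℝ) ≤ n := by exact_mod_cast le_trans (by norm_num) hn
  have hnne : (n : ℝ) ≠ 0 := ne_of_gt hn0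
  set c : ℕ → ℝ := fun i => (n : ℝ) ^ θ (i + 1) * (1 / (n : ℝ)) ^ (i + 1) / ((i : ℝ) + 1)
    with hc
  have hcnonneg : ∀ i, 0 ≤ c i := by
    intro i; simp only [hc]; positivity
  have hceven : ∀ k, c (2 * k) = 1 / (2 * (k : ℝ) + 1) := by
    intro k
    have h1 : 1 ≤ 2 * k + 1 := by omega
    obtain ⟨hodd, hdvd, hmax⟩ := hθ (2 * k + 1) h1
    have hle : θ (2 * k + 1) ≤ 2 * k + 1 := Nat.le_of_dvd (by omega) hdvd
    have hge : 2 * k + 1 ≤ θ (2 * k + 1) := hmax (2 * k + 1) ⟨k, by ring⟩ dvd_rfl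
    have hθeq : θ (2 * k + 1) = 2 * k + 1 := le_antisymm hle hge
    simp only [hc, hθeq]
    rw [one_div, inv_pow, mul_inv_cancel₀ (by positivity)]
    push_cast
    ring
  have hSdiv : ∀ M : ℝ, ∃ N : ℕ, M ≤ ∑ i ∈ Finset.range N, c i := by
    intro M
    obtain ⟨K, hK⟩ := (Real.tendsto_sum_range_one_div_nat_succ_atTop.eventually_ge_atTop
      (2 * M)).exists
    refine ⟨2 * K, ?_⟩
    have key : ∀ K : ℕ, ∑ k ∈ Finset.range K, c (2 * k) ≤ ∑ i ∈ Finset.range (2 * K), c i := by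
      intro K
      induction K with
      | zero => simp
      | succ K ih =>
        rw [Finset.sum_range_succ, show 2 * (K + 1) = 2 * K + 1 + 1 by ring,
          Finset.sum_range_succ, Finset.sum_range_succ]
        have := hcnonneg (2 * K + 1)
        linarith
    have h2 : ∑ k ∈ Finset.range K, 1 / ((k : ℝ) + 1) ≤
        2 * ∑ k ∈ Finset.range K, c (2 * k) := by
      rw [Finset.mul_sum]
      apply Finset.sum_le_sum
      intro k _
      rw [hceven k, mul_one_div, div_le_div_iff₀ (by positivity) (by positivity)]
      nlinarith [Nat.cast_nonneg (α := ℝ) k]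
    have := key K
    linarith
  rw [Filter.tendsto_atTop]
  intro M
  obtain ⟨N, hN⟩ := hSdiv (M + 1)
  have hMlt : M < ∑ i ∈ Finset.range N, c i := by linarith
  have hcont : Filter.Tendsto
      (fun t : ℝ => ∑ i ∈ Finset.range N, (n : ℝ) ^ θ (i + 1) * t ^ (i + 1) / ((i : ℝ) + 1))
      (nhdsWithin (1 / (n : ℝ)) (Set.Ioo 0 (1 / (n : ℝ))))
      (nhds (∑ i ∈ Finset.range N, c i)) := by
    apply Filter.Tendsto.mono_left _ nhdsWithin_le_nhds
    have hcts : Continuous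
        (fun t : ℝ => ∑ i ∈ Finset.range N, (n : ℝ) ^ θ (i + 1) * t ^ (i + 1) / ((i : ℝ) + 1)) := by
      apply continuous_finset_sum
      intro i _
      fun_prop
    exact hcts.tendsto (1 / (n : ℝ))
  have hev := hcont.eventually (eventually_ge_nhds hMlt)
  filter_upwards [hev, self_mem_nhdsWithin] with t ht htmem
  obtain ⟨ht0, ht1⟩ := htmem
  refine le_trans ht ?_
  have hnt1 : (n : ℝ) * t < 1 := by
    rw [lt_div_iff₀ hn0] at ht1
    linarith
  have hnt0 : 0 ≤ (n : ℝ) * t := by positivity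
  have hb : Summable (fun i : ℕ => ((n : ℝ) * t) ^ (i + 1)) := by
    have : Summable (fun i : ℕ => ((n : ℝ) * t) ^ i) :=
      summable_geometric_of_lt_one hnt0 hnt1
    simpa [pow_succ] using this.mul_right ((n : ℝ) * t)
  have hsum : Summable (fun i : ℕ => (n : ℝ) ^ θ (i + 1) * t ^ (i + 1) / ((i : ℝ) + 1)) := by
    apply hb.of_nonneg_of_le (fun i => by positivity)
    intro i
    have hθle : θ (i + 1) ≤ i + 1 :=
      Nat.le_of_dvd (by omega) (hθ (i + 1) (by omega)).2.1
    have h1 : (n : ℝ) ^ θ (i + 1) ≤ (n : ℝ) ^ (i + 1) := pow_le_pow_right₀ hn1 hθle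
    have h2 : (n : ℝ) ^ θ (i + 1) * t ^ (i + 1) ≤ (n : ℝ) ^ (i + 1) * t ^ (i + 1) := by
      apply mul_le_mul_of_nonneg_right h1 (by positivity)
    have h3 : (n : ℝ) ^ θ (i + 1) * t ^ (i + 1) / ((i : ℝ) + 1) ≤
        (n : ℝ) ^ θ (i + 1) * t ^ (i + 1) := by
      apply div_le_self (by positivity)
      have : (0 : ℝ) ≤ (i : ℝ) := Nat.cast_nonneg i
      linarith
    calc (n : ℝ) ^ θ (i + 1) * t ^ (i + 1) / ((i : ℝ) + 1)
        ≤ (n : ℝ) ^ θ (i + 1) * t ^ (i + 1) := h3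
      _ ≤ (n : ℝ) ^ (i + 1) * t ^ (i + 1) := h2
      _ = ((n : ℝ) * t) ^ (i + 1) := by rw [mul_pow]
  exact Summable.sum_le_tsum _ (fun i _ => by positivity) hsum
end
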